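/- Let p_1, …, p_k be distinct primes and d a squarefree positive integer with gcd(d, p_1⋯p_k) = 1 and gcd(d·p_1⋯p_k, a) = 1. Set α_0 = 1 and α_m = p_1⋯p_m for 1 ≤ m ≤ k. Then ρ_{d·p_1⋯p_k} = (−1)^k·(ρ_d − (μ(d)h(d)/(H_a(z)·g(d)))·R), where R = ∑_{m=1}^{k} (∏_{i=1}^{m−1} h(p_i)/g(p_i))·∑_{z/(dα_m) < l ≤ z/(dα_{m−1}), gcd(l, dα_m a) = 1} μ(l)²h(l). -/

import Mathlib

open Finset

/-- `P_a(z) = ∏_{p ≤ z, p ∤ a} p`, the product over primes up to `z` not dividing `a`. -/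
noncomputable def Pa (z : ℝ) (a : ℕ) : ℕ :=
  ∏ p ∈ (Finset.range (⌊z⌋₊ + 1)).filter (fun p => p.Prime ∧ ¬p ∣ a), p

/-- `H_a(z) = ∑_{k ≤ z, (k,a)=1} μ(k)² h(k)`. -/
noncomputable def Ha (z : ℝ) (a : ℕ) (h : ℕ → ℝ) : ℝ :=
  ∑ k ∈ (Finset.Icc 1 ⌊z⌋₊).filter (fun k => Nat.gcd k a = 1),
    (ArithmeticFunction.moebius k : ℝ) ^ 2 * h k

/-- The Selberg sieve coefficients
`ρ_d = (μ(d)h(d)/(H_a(z) g(d))) ∑_{k ≤ z/d, kd | P_a(z)} μ(k)² h(k)`. -/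
noncomputable def rhoCoeff (z : ℝ) (a : ℕ) (g h : ℕ → ℝ) (d : ℕ) : ℝ :=
  ((ArithmeticFunction.moebius d : ℝ) * h d / (Ha z a h * g d)) *
    ∑ k ∈ (Finset.Icc 1 ⌊z / (d : ℝ)⌋₊).filter (fun k => k * d ∣ Pa z a),
      (ArithmeticFunction.moebius k : ℝ) ^ 2 * h k

open ArithmeticFunction
open ArithmeticFunction.Moebius
lemma sq_prod_primes {s : Finset ℕ} (hs : ∀ p ∈ s, p.Prime) : Squarefree (∏ p ∈ s, p) := by
  induction s using Finset.induction_on with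
  | empty => simp
  | insert _ _ hq ih =>
    rename_i q s'
    rw [Finset.prod_insert hq]
    have hq' : q.Prime := hs q (Finset.mem_insert_self q s')
    have hrest : ∀ p ∈ s', p.Prime := fun p hp => hs p (Finset.mem_insert_of_mem hp)
    refine Nat.squarefree_mul_iff.mpr ⟨?_, hq'.squarefree, ih hrest⟩
    rw [Nat.Prime.coprime_iff_not_dvd hq']
    intro hdvd
    obtain ⟨r, hr, hqr⟩ := (Prime.dvd_finset_prod_iff hq'.prime _).mp hdvd
    exact hq (((Nat.prime_dvd_prime_iff_eq hq' (hrest r hr)).mp hqr) ▸ hr)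
noncomputable def Usum (z : ℝ) (a : ℕ) (h : ℕ → ℝ) (e : ℕ) : ℝ :=
  ∑ k ∈ (Finset.Icc 1 (⌊z⌋₊ / e)).filter (fun k => Nat.gcd k (e * a) = 1),
    (μ k : ℝ)^2 * h k

lemma sum_filter_sq (s : Finset ℕ) (P : ℕ → Prop) [DecidablePred P] (h : ℕ → ℝ) :
    ∑ k ∈ s.filter P, (μ k : ℝ)^2 * h k
      = ∑ k ∈ s.filter (fun k => P k ∧ Squarefree k), (μ k : ℝ)^2 * h k := by
  refine (Finset.sum_subset (Finset.monotone_filter_right s (fun x _ hx => hx.1)) ?_).symm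
  · intro x hx hx'
    have : ¬ Squarefree x := by
      intro hsq
      exact hx' (Finset.mem_filter.mpr ⟨(Finset.mem_filter.mp hx).1,
        ⟨(Finset.mem_filter.mp hx).2, hsq⟩⟩)
    rw [moebius_eq_zero_of_not_squarefree this]
    simp
lemma Pa_primeFactors (z : ℝ) (a : ℕ) :
    (Pa z a).primeFactors = (Finset.range (⌊z⌋₊ + 1)).filter (fun p => p.Prime ∧ ¬p ∣ a) :=
  Nat.primeFactors_prod (fun p hp => (Finset.mem_filter.mp hp).2.1)

lemma Pa_squarefree (z : ℝ) (a : ℕ) : Squarefree (Pa z a) :=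
  sq_prod_primes (fun p hp => (Finset.mem_filter.mp hp).2.1)

lemma mem_Pa_primeFactors {z : ℝ} {a q : ℕ} (hq : q.Prime) :
    q ∈ (Pa z a).primeFactors ↔ q ≤ ⌊z⌋₊ ∧ ¬q ∣ a := by
  rw [Pa_primeFactors, Finset.mem_filter, Finset.mem_range, Nat.lt_succ_iff]
  tauto

lemma dvd_Pa {z : ℝ} {a n : ℕ} (hn : Squarefree n)
    (H : ∀ q ∈ n.primeFactors, q ≤ ⌊z⌋₊ ∧ ¬q ∣ a) : n ∣ Pa z a := by
  conv_lhs => rw [← Nat.prod_primeFactors_of_squarefree hn]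
  apply Finset.prod_dvd_prod_of_subset
  intro q hq
  rw [← Pa_primeFactors (z := z) (a := a), mem_Pa_primeFactors (Nat.prime_of_mem_primeFactors hq)]
  exact H q hq
lemma S_eq_U {z : ℝ} {a e : ℕ} (he : Squarefree e) (hea : Nat.Coprime e a) (h : ℕ → ℝ) :
    ∑ k ∈ (Finset.Icc 1 ⌊z / (e : ℝ)⌋₊).filter (fun k => k * e ∣ Pa z a),
        (μ k : ℝ)^2 * h k
      = ∑ k ∈ (Finset.Icc 1 (⌊z⌋₊ / e)).filter (fun k => Nat.gcd k (e * a) = 1),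
        (μ k : ℝ)^2 * h k := by
  have he0 : 0 < e := he.ne_zero.bot_lt
  rw [Nat.floor_div_natCast, sum_filter_sq _ (fun k => k * e ∣ Pa z a),
    sum_filter_sq _ (fun k => Nat.gcd k (e * a) = 1)]
  rcases le_or_gt e ⌊z⌋₊ with hle | hlt
  · have hfeq : (Finset.Icc 1 (⌊z⌋₊ / e)).filter (fun k => k * e ∣ Pa z a ∧ Squarefree k)
        = (Finset.Icc 1 (⌊z⌋₊ / e)).filter (fun k => Nat.gcd k (e * a) = 1 ∧ Squarefree k) := by
      apply Finset.filter_congr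
      intro x hx
      simp only [Finset.mem_Icc] at hx
      simp only [and_congr_left_iff]
      intro hsq
      have hx0 : 0 < x := hx.1
      have hxN : x ≤ ⌊z⌋₊ := le_trans hx.2 (Nat.div_le_self _ _)
      constructor
      · intro hdvd
        have hxe : Nat.Coprime x e := by
          apply Nat.coprime_of_dvd
          intro q hq hqx hqe
          exact Nat.squarefree_iff_prime_squarefree.mp (Pa_squarefree z a) q hq
            (dvd_trans (mul_dvd_mul hqx hqe) hdvd)
        have hxa : Nat.Coprime x a := by
          apply Nat.coprime_of_dvd
          intro q hq hqx hqa
          have hqPa : q ∣ Pa z a := dvd_trans (dvd_trans hqx (dvd_mul_right x e)) hdvd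
          have : q ∈ (Pa z a).primeFactors :=
            Nat.mem_primeFactors.mpr ⟨hq, hqPa, (Pa_squarefree z a).ne_zero⟩
          exact ((mem_Pa_primeFactors hq).mp this).2 hqa
        exact Nat.Coprime.mul_right hxe hxa
      · intro hcopr
        have hxe : Nat.Coprime x e := Nat.Coprime.coprime_dvd_right (dvd_mul_right e a) hcopr
        have hxa : Nat.Coprime x a := Nat.Coprime.coprime_dvd_right (dvd_mul_left a e) hcopr
        apply dvd_Pa (Nat.squarefree_mul_iff.mpr ⟨hxe, hsq, he⟩)
        intro q hq
        rw [Nat.primeFactors_mul hx0.ne' he0.ne', Finset.mem_union] at hq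
        rcases hq with hq | hq
        · obtain ⟨hqp, hqx, -⟩ := Nat.mem_primeFactors.mp hq
          refine ⟨le_trans (Nat.le_of_dvd hx0 hqx) hxN, fun hqa => ?_⟩
          exact hqp.one_lt.ne' (Nat.eq_one_of_dvd_coprimes hxa hqx hqa)
        · obtain ⟨hqp, hqe, -⟩ := Nat.mem_primeFactors.mp hq
          refine ⟨le_trans (Nat.le_of_dvd he0 hqe) hle, fun hqa => ?_⟩
          exact hqp.one_lt.ne' (Nat.eq_one_of_dvd_coprimes hea hqe hqa)
    rw [hfeq]
  · have : ⌊z⌋₊ / e = 0 := Nat.div_eq_of_lt hlt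
    rw [this]
    simp
lemma moebius_sq_real {n : ℕ} (hn : Squarefree n) : (μ n : ℝ)^2 = 1 := by
  exact_mod_cast congrArg (fun x : ℤ => (x : ℝ)) (moebius_sq_eq_one_of_squarefree hn)

lemma U_step {z : ℝ} {a : ℕ} (g h : ℕ → ℝ)
    (hhmul : ∀ m n : ℕ, Nat.Coprime m n → h (m * n) = h m * h n)
    (hhp : ∀ r : ℕ, r.Prime → h r = g r / (1 - g r))
    (hgp : ∀ r : ℕ, r.Prime → 0 < g r ∧ g r < 1)
    {e q : ℕ} (pp : q.Prime) (hpe : ¬q ∣ e) (hpa : ¬q ∣ a) :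
    Usum z a h e = (h q / g q) * Usum z a h (e * q)
      + ∑ l ∈ (Finset.Ioc (⌊z⌋₊ / (e * q)) (⌊z⌋₊ / e)).filter
          (fun l => Nat.gcd l (e * q * a) = 1), (μ l : ℝ)^2 * h l := by
  have hqea : Nat.Coprime q (e * a) :=
    Nat.Coprime.mul_right ((pp.coprime_iff_not_dvd).mpr hpe) ((pp.coprime_iff_not_dvd).mpr hpa)
  set M := ⌊z⌋₊ / e with hMdef
  have hM' : ⌊z⌋₊ / (e * q) = M / q := by rw [hMdef, Nat.div_div_eq_div_mul]
  -- part A : sum over multiples of q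
  have partA : ∑ k ∈ ((Finset.Icc 1 M).filter (fun k => Nat.gcd k (e * a) = 1)).filter
        (fun k => q ∣ k), (μ k : ℝ)^2 * h k
      = h q * ∑ l ∈ (Finset.Icc 1 (M / q)).filter (fun l => Nat.gcd l (e * q * a) = 1),
          (μ l : ℝ)^2 * h l := by
    rw [Finset.filter_filter, sum_filter_sq _ (fun k => Nat.gcd k (e * a) = 1 ∧ q ∣ k),
      sum_filter_sq _ (fun l => Nat.gcd l (e * q * a) = 1), Finset.mul_sum]
    apply Finset.sum_nbij' (i := fun k => k / q) (j := fun l => q * l)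
    · intro k hk
      simp only [Finset.mem_filter, Finset.mem_Icc] at hk ⊢
      obtain ⟨⟨hk1, hk2⟩, ⟨hC, hqk⟩, hsq⟩ := hk
      obtain ⟨l, rfl⟩ := hqk
      rw [Nat.mul_div_cancel_left _ pp.pos]
      have hl0 : 1 ≤ l := Nat.pos_of_ne_zero (by rintro rfl; simp at hk1)
      have hsql : Squarefree l := Squarefree.squarefree_of_dvd (dvd_mul_left l q) hsq
      have hlq : Nat.Coprime l q := (Nat.coprime_of_squarefree_mul hsq).symm
      have hlea : Nat.Coprime l (e * a) := Nat.Coprime.coprime_dvd_left (dvd_mul_left l q) hC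
      obtain ⟨hle, hla⟩ := Nat.coprime_mul_iff_right.mp hlea
      refine ⟨⟨hl0, ?_⟩, ?_, hsql⟩
      · rw [Nat.le_div_iff_mul_le pp.pos, mul_comm]; exact hk2
      · exact Nat.Coprime.mul_right (Nat.Coprime.mul_right hle hlq) hla
    · intro l hl
      simp only [Finset.mem_filter, Finset.mem_Icc] at hl ⊢
      obtain ⟨⟨hl1, hl2⟩, hC, hsql⟩ := hl
      obtain ⟨hleq, hla⟩ := Nat.coprime_mul_iff_right.mp hC
      obtain ⟨hle, hlq⟩ := Nat.coprime_mul_iff_right.mp hleq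
      refine ⟨⟨Nat.one_le_iff_ne_zero.mpr (Nat.mul_ne_zero pp.ne_zero (Nat.one_le_iff_ne_zero.mp hl1)), ?_⟩,
        ⟨?_, dvd_mul_right q l⟩, ?_⟩
      · rw [mul_comm]; exact (Nat.le_div_iff_mul_le pp.pos).mp hl2
      · exact Nat.Coprime.mul hqea (Nat.Coprime.mul_right hle hla)
      · exact Nat.squarefree_mul_iff.mpr ⟨hlq.symm.symm.symm, pp.prime.squarefree, hsql⟩
    · intro k hk
      simp only [Finset.mem_filter, Finset.mem_Icc] at hk
      exact Nat.mul_div_cancel' hk.2.1.2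
    · intro l _
      exact Nat.mul_div_cancel_left _ pp.pos
    · intro k hk
      simp only [Finset.mem_filter, Finset.mem_Icc] at hk
      obtain ⟨⟨hk1, hk2⟩, ⟨hC, hqk⟩, hsq⟩ := hk
      obtain ⟨l, rfl⟩ := hqk
      rw [Nat.mul_div_cancel_left _ pp.pos]
      have hsql : Squarefree l := Squarefree.squarefree_of_dvd (dvd_mul_left l q) hsq
      have hlq : Nat.Coprime q l := Nat.coprime_of_squarefree_mul hsq
      rw [moebius_sq_real hsq, moebius_sq_real hsql, hhmul q l hlq]
      ring
  -- part B : sum over non-multiples of q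
  have hdisj : Disjoint ((Finset.Ioc 0 (M / q)).filter (fun l => Nat.gcd l (e * q * a) = 1))
      ((Finset.Ioc (M / q) M).filter (fun l => Nat.gcd l (e * q * a) = 1)) := by
    apply Finset.disjoint_filter_filter
    rw [Finset.disjoint_left]
    intro x hx hx'
    rw [Finset.mem_Ioc] at hx hx'
    exact absurd hx.2 (not_le.mpr hx'.1)
  have partB : ∑ k ∈ ((Finset.Icc 1 M).filter (fun k => Nat.gcd k (e * a) = 1)).filter
        (fun k => ¬ q ∣ k), (μ k : ℝ)^2 * h k
      = (∑ l ∈ (Finset.Icc 1 (M / q)).filter (fun l => Nat.gcd l (e * q * a) = 1),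
          (μ l : ℝ)^2 * h l)
        + ∑ l ∈ (Finset.Ioc (M / q) M).filter (fun l => Nat.gcd l (e * q * a) = 1),
          (μ l : ℝ)^2 * h l := by
    rw [Finset.filter_filter]
    have hfeq : (Finset.Icc 1 M).filter (fun k => Nat.gcd k (e * a) = 1 ∧ ¬ q ∣ k)
        = (Finset.Icc 1 M).filter (fun k => Nat.gcd k (e * q * a) = 1) := by
      apply Finset.filter_congr
      intro x _
      constructor
      · rintro ⟨h1, h2⟩
        obtain ⟨hxe, hxa⟩ := Nat.coprime_mul_iff_right.mp h1
        have hxq : Nat.Coprime x q := Nat.coprime_comm.mp (pp.coprime_iff_not_dvd.mpr h2)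
        exact Nat.Coprime.mul_right (Nat.Coprime.mul_right hxe hxq) hxa
      · intro hC
        obtain ⟨hxeq, hxa⟩ := Nat.coprime_mul_iff_right.mp hC
        obtain ⟨hxe, hxq⟩ := Nat.coprime_mul_iff_right.mp hxeq
        exact ⟨Nat.Coprime.mul_right hxe hxa, pp.coprime_iff_not_dvd.mp (Nat.coprime_comm.mp hxq)⟩
    rw [hfeq]
    have h1M : Finset.Icc 1 M = Finset.Ioc 0 M := by rw [← Finset.Icc_add_one_left_eq_Ioc, zero_add]
    have h1M' : Finset.Icc 1 (M / q) = Finset.Ioc 0 (M / q) := by rw [← Finset.Icc_add_one_left_eq_Ioc, zero_add]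
    rw [h1M, h1M', ← Finset.Ioc_union_Ioc_eq_Ioc (Nat.zero_le (M / q)) (Nat.div_le_self M q),
      Finset.filter_union, Finset.sum_union hdisj]
  -- combine
  have hsplit := Finset.sum_filter_add_sum_filter_not
    ((Finset.Icc 1 M).filter (fun k => Nat.gcd k (e * a) = 1)) (fun k => q ∣ k)
    (fun k => (μ k : ℝ)^2 * h k)
  have hfrac : h q / g q = h q + 1 := by
    obtain ⟨h1, h2⟩ := hgp q pp
    rw [hhp q pp]
    have hne : (1 : ℝ) - g q ≠ 0 := by linarith
    field_simp
    ring
  show (∑ k ∈ (Finset.Icc 1 M).filter (fun k => Nat.gcd k (e * a) = 1), (μ k : ℝ)^2 * h k) = _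
  rw [← hsplit, partA, partB, hM', hfrac]
  show _ = (h q + 1) * Usum z a h (e * q) + _
  rw [Usum, hM']
  ring
lemma U_tel {z : ℝ} {a : ℕ} (g h : ℕ → ℝ)
    (hhmul : ∀ m n : ℕ, Nat.Coprime m n → h (m * n) = h m * h n)
    (hhp : ∀ r : ℕ, r.Prime → h r = g r / (1 - g r))
    (hgp : ∀ r : ℕ, r.Prime → 0 < g r ∧ g r < 1)
    (d : ℕ) (k : ℕ) (p : ℕ → ℕ) (hp : ∀ i < k, (p i).Prime)
    (hinj : ∀ i < k, ∀ j < k, p i = p j → i = j)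
    (hpd : ∀ i < k, ¬ p i ∣ d) (hpa : ∀ i < k, ¬ p i ∣ a) :
    Usum z a h d = (∏ i ∈ Finset.range k, h (p i) / g (p i)) *
        Usum z a h (d * ∏ i ∈ Finset.range k, p i)
      + ∑ m ∈ Finset.range k, (∏ i ∈ Finset.range m, h (p i) / g (p i)) *
          ∑ l ∈ (Finset.Ioc (⌊z⌋₊ / (d * ∏ i ∈ Finset.range (m+1), p i))
                (⌊z⌋₊ / (d * ∏ i ∈ Finset.range m, p i))).filter
              (fun l => Nat.gcd l (d * (∏ i ∈ Finset.range (m+1), p i) * a) = 1),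
            (μ l : ℝ)^2 * h l := by
  induction k with
  | zero => simp
  | succ n ih =>
    have hpn : (p n).Prime := hp n (Nat.lt_succ_self n)
    have hnd : ¬ p n ∣ d * ∏ i ∈ Finset.range n, p i := by
      rw [Nat.Prime.dvd_mul hpn]
      rintro (hc | hc)
      · exact hpd n (Nat.lt_succ_self n) hc
      · obtain ⟨i, hi, hdvd⟩ := (Prime.dvd_finset_prod_iff hpn.prime _).mp hc
        rw [Finset.mem_range] at hi
        have := hinj n (Nat.lt_succ_self n) i (hi.trans (Nat.lt_succ_self n))
          ((Nat.prime_dvd_prime_iff_eq hpn (hp i (hi.trans (Nat.lt_succ_self n)))).mp hdvd)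
        omega
    have hna : ¬ p n ∣ a := hpa n (Nat.lt_succ_self n)
    have hstep := U_step (z := z) g h hhmul hhp hgp hpn hnd hna
    rw [ih (fun i hi => hp i (hi.trans (Nat.lt_succ_self n)))
      (fun i hi j hj hij => hinj i (hi.trans (Nat.lt_succ_self n))
        j (hj.trans (Nat.lt_succ_self n)) hij)
      (fun i hi => hpd i (hi.trans (Nat.lt_succ_self n)))
      (fun i hi => hpa i (hi.trans (Nat.lt_succ_self n))), hstep]
    simp only [Finset.prod_range_succ, Finset.sum_range_succ, ← mul_assoc]
    ring
lemma not_dvd_prod_range {p : ℕ → ℕ} {n : ℕ} (hpn : (p n).Prime)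
    (hp : ∀ i < n, (p i).Prime) (hne : ∀ i < n, p i ≠ p n) :
    ¬ p n ∣ ∏ i ∈ Finset.range n, p i := by
  intro hc
  obtain ⟨i, hi, hdvd⟩ := (Prime.dvd_finset_prod_iff hpn.prime _).mp hc
  rw [Finset.mem_range] at hi
  exact hne i hi ((Nat.prime_dvd_prime_iff_eq hpn (hp i hi)).mp hdvd).symm
lemma sq_prod_range {p : ℕ → ℕ} {k : ℕ} (hp : ∀ i < k, (p i).Prime)
    (hinj : ∀ i < k, ∀ j < k, p i = p j → i = j) :
    Squarefree (∏ i ∈ Finset.range k, p i) := by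
  induction k with
  | zero => simp
  | succ n ih =>
    rw [Finset.prod_range_succ]
    have hpn : (p n).Prime := hp n (Nat.lt_succ_self n)
    have hnd : ¬ p n ∣ ∏ i ∈ Finset.range n, p i :=
      not_dvd_prod_range hpn (fun i hi => hp i (hi.trans (Nat.lt_succ_self n)))
        (fun i hi hie => by
          have := hinj i (hi.trans (Nat.lt_succ_self n)) n (Nat.lt_succ_self n) hie; omega)
    exact Nat.squarefree_mul_iff.mpr
      ⟨Nat.coprime_comm.mp (hpn.coprime_iff_not_dvd.mpr hnd),
        ih (fun i hi => hp i (hi.trans (Nat.lt_succ_self n)))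
          (fun i hi j hj hij => hinj i (hi.trans (Nat.lt_succ_self n))
            j (hj.trans (Nat.lt_succ_self n)) hij),
        hpn.prime.squarefree⟩
lemma mult_prod_range (f : ℕ → ℝ) (hf1 : f 1 = 1)
    (hfmul : ∀ m n : ℕ, Nat.Coprime m n → f (m * n) = f m * f n)
    {p : ℕ → ℕ} {k : ℕ} (hp : ∀ i < k, (p i).Prime)
    (hinj : ∀ i < k, ∀ j < k, p i = p j → i = j) :
    f (∏ i ∈ Finset.range k, p i) = ∏ i ∈ Finset.range k, f (p i) := by
  induction k with
  | zero => simpa using hf1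
  | succ n ih =>
    rw [Finset.prod_range_succ, Finset.prod_range_succ]
    have hpn : (p n).Prime := hp n (Nat.lt_succ_self n)
    have hnd : ¬ p n ∣ ∏ i ∈ Finset.range n, p i :=
      not_dvd_prod_range hpn (fun i hi => hp i (hi.trans (Nat.lt_succ_self n)))
        (fun i hi hie => by
          have := hinj i (hi.trans (Nat.lt_succ_self n)) n (Nat.lt_succ_self n) hie; omega)
    rw [hfmul _ _ (Nat.coprime_comm.mp (hpn.coprime_iff_not_dvd.mpr hnd)),
      ih (fun i hi => hp i (hi.trans (Nat.lt_succ_self n)))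
        (fun i hi j hj hij => hinj i (hi.trans (Nat.lt_succ_self n))
          j (hj.trans (Nat.lt_succ_self n)) hij)]
lemma sum_Icc_one (F : ℕ → ℝ) (k : ℕ) :
    ∑ m ∈ Finset.Icc 1 k, F m = ∑ m ∈ Finset.range k, F (m + 1) := by
  apply Finset.sum_nbij' (i := fun m => m - 1) (j := fun m => m + 1)
  · intro m hm; rw [Finset.mem_Icc] at hm; rw [Finset.mem_range]; omega
  · intro m hm; rw [Finset.mem_range] at hm; rw [Finset.mem_Icc]; omega
  · intro m hm; rw [Finset.mem_Icc] at hm; omega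
  · intro m _; omega
  · intro m hm; rw [Finset.mem_Icc] at hm
    exact congrArg F (by omega)

/-- For distinct primes `p_1, …, p_k` (here `p 0, …, p (k-1)`) and squarefree `d` with
`(d, p_1⋯p_k) = 1` and `(d p_1⋯p_k, a) = 1`, writing `α_m = p_1⋯p_m`:
`ρ_{d p_1⋯p_k} = (-1)^k (ρ_d - (μ(d)h(d)/(H_a(z)g(d))) R)` with
`R = ∑_{m=1}^k (∏_{i=1}^{m-1} h(p_i)/g(p_i)) ∑_{z/(dα_m) < l ≤ z/(dα_{m-1}), (l,dα_m a)=1}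
μ(l)² h(l)`. -/
theorem rho_mul_primes (a : ℕ) (ha : 1 ≤ a) (z : ℝ) (hz : 2 ≤ z) (g h : ℕ → ℝ)
    (hg1 : g 1 = 1) (hgmul : ∀ m n : ℕ, Nat.Coprime m n → g (m * n) = g m * g n)
    (hgp : ∀ p : ℕ, p.Prime → 0 < g p ∧ g p < 1)
    (hh1 : h 1 = 1) (hhmul : ∀ m n : ℕ, Nat.Coprime m n → h (m * n) = h m * h n)
    (hhp : ∀ p : ℕ, p.Prime → h p = g p / (1 - g p))
    (k : ℕ) (hk : 1 ≤ k) (p : ℕ → ℕ) (hp : ∀ i < k, (p i).Prime)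
    (hinj : ∀ i < k, ∀ j < k, p i = p j → i = j)
    (d : ℕ) (hd : Squarefree d)
    (hcop : Nat.Coprime d (∏ i ∈ Finset.range k, p i))
    (hcopa : Nat.Coprime (d * ∏ i ∈ Finset.range k, p i) a) :
    rhoCoeff z a g h (d * ∏ i ∈ Finset.range k, p i) =
      (-1 : ℝ) ^ k *
        (rhoCoeff z a g h d -
          ((ArithmeticFunction.moebius d : ℝ) * h d / (Ha z a h * g d)) *
            ∑ m ∈ Finset.Icc 1 k,
              (∏ i ∈ Finset.range (m - 1), h (p i) / g (p i)) *
                ∑ l ∈ (Finset.Ioc ⌊z / ((d * ∏ i ∈ Finset.range m, p i : ℕ) : ℝ)⌋₊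
                      ⌊z / ((d * ∏ i ∈ Finset.range (m - 1), p i : ℕ) : ℝ)⌋₊).filter
                    (fun l => Nat.gcd l (d * (∏ i ∈ Finset.range m, p i) * a) = 1),
                  (ArithmeticFunction.moebius l : ℝ) ^ 2 * h l) := by
  classical
  set α := ∏ i ∈ Finset.range k, p i with hα
  have hαsq : Squarefree α := sq_prod_range hp hinj
  have hdα : Squarefree (d * α) := Nat.squarefree_mul_iff.mpr ⟨hcop, hd, hαsq⟩
  have hda : Nat.Coprime d a := Nat.Coprime.coprime_dvd_left (dvd_mul_right d α) hcopa
  have hpd : ∀ i < k, ¬ p i ∣ d := by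
    intro i hi hdvd
    have hpiα : p i ∣ α := Finset.dvd_prod_of_mem p (Finset.mem_range.mpr hi)
    exact (hp i hi).one_lt.ne' (Nat.eq_one_of_dvd_coprimes hcop hdvd hpiα)
  have hpa' : ∀ i < k, ¬ p i ∣ a := by
    intro i hi hdvd
    have hpiα : p i ∣ d * α := dvd_mul_of_dvd_right
      (Finset.dvd_prod_of_mem p (Finset.mem_range.mpr hi)) d
    exact (hp i hi).one_lt.ne' (Nat.eq_one_of_dvd_coprimes hcopa hpiα hdvd)
  have hρ1 : rhoCoeff z a g h d
      = ((μ d : ℝ) * h d / (Ha z a h * g d)) * Usum z a h d := by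
    rw [rhoCoeff, S_eq_U hd hda h, Usum]
  have hρ2 : rhoCoeff z a g h (d * α)
      = ((μ (d * α) : ℝ) * h (d * α) / (Ha z a h * g (d * α))) * Usum z a h (d * α) := by
    rw [rhoCoeff, S_eq_U hdα hcopa h, Usum]
  have hμmul : ∀ m n : ℕ, Nat.Coprime m n → ((μ (m * n) : ℤ) : ℝ) = (μ m : ℝ) * (μ n : ℝ) := by
    intro m n hmn
    rw [ArithmeticFunction.isMultiplicative_moebius.map_mul_of_coprime hmn]
    push_cast; ring
  have hμα : ((μ (d * α) : ℤ) : ℝ) = (μ d : ℝ) * (-1 : ℝ) ^ k := by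
    rw [hμmul d α hcop]
    congr 1
    rw [hα, mult_prod_range (fun n => (μ n : ℝ)) (by simp) hμmul hp hinj]
    have hval : ∀ i ∈ Finset.range k, ((μ (p i) : ℤ) : ℝ) = -1 := fun i hi => by
      rw [moebius_apply_prime (hp i (Finset.mem_range.mp hi))]; norm_num
    calc (∏ i ∈ Finset.range k, ((μ (p i) : ℤ) : ℝ))
        = ∏ _i ∈ Finset.range k, (-1 : ℝ) := Finset.prod_congr rfl hval
      _ = (-1 : ℝ) ^ k := by simp
  have hhα : h (d * α) = h d * ∏ i ∈ Finset.range k, h (p i) := by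
    rw [hhmul d α hcop, hα, mult_prod_range h hh1 hhmul hp hinj]
  have hgα : g (d * α) = g d * ∏ i ∈ Finset.range k, g (p i) := by
    rw [hgmul d α hcop, hα, mult_prod_range g hg1 hgmul hp hinj]
  have htel := U_tel (z := z) g h hhmul hhp hgp d k p hp hinj hpd hpa'
  rw [hρ1, hρ2, hμα, hhα, hgα, htel]
  simp only [Nat.floor_div_natCast]
  rw [sum_Icc_one]
  simp only [Nat.add_sub_cancel, ← hα, Finset.prod_div_distrib]
  ring
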